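/- For any logic L (with a notion of elementary submodel satisfying reducts and expansions by constants), the Löwenheim–Skolem–Tarski spectrum LSTS(L) is a closed class of cardinals: the supremum of any strictly increasing sequence of cardinals in LSTS(L) is again in LSTS(L). -/

import Mathlib

/-- An abstract logic with a notion of elementary substructure: a class of
structures (of countable signature), each with an underlying set, and a predicate
saying that a subset of the underlying set carries an `L`-elementary substructure. -/
structure LogicWithElem where
  /-- the structures (of countable signature) for the logic -/
  Struc : Type 1
  /-- the underlying set of a structure -/
  carrier : Struc → Type
  /-- the subset carries an `L`-elementary substructure of the given structure -/
  ElemSubOn : (A : Struc) → Set (carrier A) → Prop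

/-- `μ` belongs to the Löwenheim–Skolem–Tarski spectrum `LSTS(L)`: for every
structure `𝔄` (of countable signature) and every `S ⊆ |𝔄|` with `|S| < μ` there is
`𝔅 ≺_L 𝔄` with `S ⊆ |𝔅|` and `‖𝔅‖ < μ`. -/
def InLSTS (L : LogicWithElem) (μ : Cardinal.{0}) : Prop :=
  ∀ (A : L.Struc) (S : Set (L.carrier A)), Cardinal.mk ↥S < μ →
    ∃ B : Set (L.carrier A), S ⊆ B ∧ Cardinal.mk ↥B < μ ∧ L.ElemSubOn A B

/-- Lemma 1.8: `LSTS(L)` is a closed class of cardinals: the supremum of any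
(nonempty) strictly increasing sequence of cardinals in `LSTS(L)` is again in
`LSTS(L)`. -/
theorem stmt8 (L : LogicWithElem) (δ : Ordinal.{0}) (hδ : δ ≠ 0)
    (f : Ordinal → Cardinal.{0})
    (hmono : ∀ α β : Ordinal, α < β → β < δ → f α < f β)
    (hmem : ∀ α < δ, InLSTS L (f α)) :
    InLSTS L (sSup (f '' Set.Iio δ)) := by
  intro A S hS
  haveI : Small.{0} (Set.Iio δ) := Ordinal.small_Iio δ
  haveI : Small.{0} (f '' Set.Iio δ) := small_image f _
  have bdd : BddAbove (f '' Set.Iio δ) := Cardinal.bddAbove_of_small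
  obtain ⟨c, hc, hlt⟩ : ∃ c ∈ f '' Set.Iio δ, Cardinal.mk ↥S < c := by
    by_contra h
    push_neg at h
    exact hS.not_ge (csSup_le ⟨f 0, ⟨0, pos_iff_ne_zero.2 hδ, rfl⟩⟩ h)
  obtain ⟨α, hα, rfl⟩ := hc
  obtain ⟨B, hSB, hB, hel⟩ := hmem α hα A S hlt
  exact ⟨B, hSB, hB.trans_le (le_csSup bdd ⟨α, hα, rfl⟩), hel⟩
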